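/- For all integers n ≥ 1, δ ≥ 2 and every real C ≥ δ + 2, every schedule of the tree T(n, δ) on |V| processors whose makespan is at most C has peak memory at least n(δ² + 5δ − 6) / (C − 2). -/

import Mathlib

/-- A finite rooted in-tree: every node has a parent (the root is its own
parent), and a rank function witnesses that following parents strictly
decreases towards the root, so every node has a unique path to the root. -/
structure InTree where
  V : Type
  [fin : Fintype V]
  [deq : DecidableEq V]
  root : V
  parent : V → V
  parent_root : parent root = root
  rk : V → ℕ
  rk_lt : ∀ v, v ≠ root → rk (parent v) < rk v
  rk_root : ∀ v, rk v = 0 → v = root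

attribute [instance] InTree.fin InTree.deq

/-- A schedule of `T` on `p` processors: at most `p` tasks per unit time step,
and every non-root task finishes before its parent starts. -/
def InTree.IsSchedule (T : InTree) (p : ℕ) (t : T.V → ℕ) : Prop :=
  (∀ s : ℕ, (Finset.univ.filter (fun i => t i = s)).card ≤ p) ∧
  (∀ i : T.V, i ≠ T.root → t i + 1 ≤ t (T.parent i))

/-- Makespan of a schedule: `max_i (t i + 1)`. -/
def InTree.makespan (T : InTree) (t : T.V → ℕ) : ℕ :=
  Finset.univ.sup (fun i => t i + 1)

/-- Memory used at step `s`: number of nodes `i` with `t i ≤ s` that are the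
root or whose parent has not finished before step `s`. -/
def InTree.memAt (T : InTree) (t : T.V → ℕ) (s : ℕ) : ℕ :=
  (Finset.univ.filter (fun i : T.V => t i ≤ s ∧ (i = T.root ∨ s ≤ t (T.parent i)))).card

/-- Peak memory of a schedule: maximum memory usage over steps `0 ≤ s < makespan`. -/
def InTree.peakMemory (T : InTree) (t : T.V → ℕ) : ℕ :=
  (Finset.range (T.makespan t)).sup (T.memAt t)


/-- Node set of the tree `T(n, δ)` used in the inapproximability proof:
a root; for each `i < n` a chain `cp^i_1, …, cp^i_{δ-1}` (index `j : Fin (δ-1)`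
represents `cp^i_{j+1}`); for each `cp^i_j` a child `d^i_j`; for each `d^i_j`
its `δ - (j+1) + 1 = δ - j` leaf children; and two extra nodes `b^i_δ`,
`b^i_{δ+1}` below `cp^i_{δ-1}`. -/
abbrev TV (n δ : ℕ) : Type :=
  Unit ⊕ (Fin n × Fin (δ-1)) ⊕ (Fin n × Fin (δ-1)) ⊕
    (Σ q : Fin n × Fin (δ-1), Fin (δ - q.2.val)) ⊕ (Fin n) ⊕ (Fin n)

/-- The tree `T(n, δ)` of the inapproximability proof. -/
def theTree (n δ : ℕ) (hδ : 2 ≤ δ) : InTree where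
  V := TV n δ
  root := Sum.inl ()
  parent := fun v => match v with
    | Sum.inl _ => Sum.inl ()
    | Sum.inr (Sum.inl (i, j)) =>
        if h : j.val = 0 then Sum.inl ()
        else Sum.inr (Sum.inl (i, ⟨j.val - 1, by have := j.isLt; omega⟩))
    | Sum.inr (Sum.inr (Sum.inl (i, j))) => Sum.inr (Sum.inl (i, j))
    | Sum.inr (Sum.inr (Sum.inr (Sum.inl ⟨q, _⟩))) => Sum.inr (Sum.inr (Sum.inl q))
    | Sum.inr (Sum.inr (Sum.inr (Sum.inr (Sum.inl i)))) =>
        Sum.inr (Sum.inl (i, ⟨δ - 2, by omega⟩))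
    | Sum.inr (Sum.inr (Sum.inr (Sum.inr (Sum.inr i)))) =>
        Sum.inr (Sum.inr (Sum.inr (Sum.inr (Sum.inl i))))
  parent_root := rfl
  rk := fun v => match v with
    | Sum.inl _ => 0
    | Sum.inr (Sum.inl (_, j)) => j.val + 1
    | Sum.inr (Sum.inr (Sum.inl (_, j))) => j.val + 2
    | Sum.inr (Sum.inr (Sum.inr (Sum.inl ⟨q, _⟩))) => q.2.val + 3
    | Sum.inr (Sum.inr (Sum.inr (Sum.inr (Sum.inl _)))) => δ
    | Sum.inr (Sum.inr (Sum.inr (Sum.inr (Sum.inr _)))) => δ + 1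
  rk_lt := by
    rintro (u | ⟨i, j⟩ | ⟨i, j⟩ | ⟨q, k⟩ | i | i) h
    · cases u; exact absurd rfl h
    · by_cases h0 : j.val = 0 <;> simp [h0] <;> omega
    · simp
    · simp
    · simp; omega
    · simp
  rk_root := by
    rintro (u | ⟨i, j⟩ | ⟨i, j⟩ | ⟨q, k⟩ | i | i) h
    · cases u; rfl
    · simp at h
    · simp at h
    · simp at h
    · simp at h; omega
    · simp at h

/-- The node `cp^i_{j+1}` of `T(n, δ)`. -/
def cpNode (n δ : ℕ) (hδ : 2 ≤ δ) (i : Fin n) (j : Fin (δ-1)) : (theTree n δ hδ).V :=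
  Sum.inr (Sum.inl (i, j))

/-- window residency count -/
def InTree.win (T : InTree) (t : T.V → ℕ) (R : ℕ) (v : T.V) : ℕ :=
  ((Finset.range R).filter (fun s => t v ≤ s ∧ (v = T.root ∨ s ≤ t (T.parent v)))).card

lemma tree_le_root (T : InTree) (t : T.V → ℕ)
    (hpar : ∀ i, i ≠ T.root → t i + 1 ≤ t (T.parent i)) : ∀ v, t v ≤ t T.root := by
  suffices H : ∀ k v, T.rk v ≤ k → t v ≤ t T.root by exact fun v => H (T.rk v) v le_rfl
  intro k
  induction k with
  | zero =>
    intro v hv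
    have := T.rk_root v (Nat.le_zero.mp hv)
    subst this; exact le_rfl
  | succ k ih =>
    intro v hv
    by_cases hvr : v = T.root
    · subst hvr; exact le_rfl
    · have h1 := hpar v hvr
      have h2 := T.rk_lt v hvr
      have h3 := ih (T.parent v) (by omega)
      omega

lemma makespan_eq (T : InTree) (t : T.V → ℕ)
    (hpar : ∀ i, i ≠ T.root → t i + 1 ≤ t (T.parent i)) :
    T.makespan t = t T.root + 1 := by
  refine le_antisymm (Finset.sup_le fun v _ => ?_)
    (Finset.le_sup (f := fun i => t i + 1) (Finset.mem_univ T.root))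
  have := tree_le_root T t hpar v; omega

lemma memAt_le_peak (T : InTree) (t : T.V → ℕ) (s : ℕ) (hs : s < T.makespan t) :
    T.memAt t s ≤ T.peakMemory t :=
  Finset.le_sup (Finset.mem_range.2 hs)

lemma sum_win (T : InTree) (t : T.V → ℕ) (R : ℕ) :
    ∑ s ∈ Finset.range R, T.memAt t s = ∑ v : T.V, T.win t R v := by
  simp only [InTree.memAt, InTree.win, Finset.card_filter]
  exact Finset.sum_comm

lemma win_lb (T : InTree) (t : T.V → ℕ) (R : ℕ) (v : T.V) (e : ℕ)
    (h1 : t v ≤ e) (h2 : e ≤ t (T.parent v)) (h3 : e < R) :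
    e + 1 - t v ≤ T.win t R v := by
  have hsub : Finset.Icc (t v) e ⊆
      (Finset.range R).filter (fun s => t v ≤ s ∧ (v = T.root ∨ s ≤ t (T.parent v))) := by
    intro s hs
    rw [Finset.mem_Icc] at hs
    rw [Finset.mem_filter, Finset.mem_range]
    exact ⟨by omega, hs.1, Or.inr (by omega)⟩
  have := Finset.card_le_card hsub
  rwa [Nat.card_Icc] at this

lemma sumIte (e : ℕ) (he : 1 ≤ e) :
    ∑ j ∈ Finset.range e, (if j = 0 then 1 else 2) = 2*e - 1 := by
  induction e with
  | zero => omega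
  | succ k ih =>
    rw [Finset.sum_range_succ]
    rcases Nat.eq_zero_or_pos k with hk | hk
    · subst hk; simp
    · rw [ih hk]; have : ¬ (k = 0) := by omega
      simp [this]; omega

lemma sumA : ∀ e a : ℕ, ∑ j ∈ Finset.range e, (a + 2*(e-j)) = e*a + e*e + e := by
  intro e
  induction e with
  | zero => simp
  | succ k ih =>
    intro a
    rw [Finset.sum_range_succ]
    have hc : ∑ j ∈ Finset.range k, (a + 2*(k+1-j)) = ∑ j ∈ Finset.range k, ((a+2) + 2*(k-j)) := by
      apply Finset.sum_congr rfl
      intro j hj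
      rw [Finset.mem_range] at hj
      omega
    rw [hc, ih (a+2)]
    ring_nf
    omega

lemma sum_TV (n δ : ℕ) (f : TV n δ → ℕ) :
    ∑ v : TV n δ, f v
      = f (Sum.inl ())
        + ((∑ p : Fin n × Fin (δ-1), f (Sum.inr (Sum.inl p)))
        + ((∑ p : Fin n × Fin (δ-1), f (Sum.inr (Sum.inr (Sum.inl p))))
        + ((∑ σ : (Σ q : Fin n × Fin (δ-1), Fin (δ - q.2.val)),
              f (Sum.inr (Sum.inr (Sum.inr (Sum.inl σ)))))
        + ((∑ i : Fin n, f (Sum.inr (Sum.inr (Sum.inr (Sum.inr (Sum.inl i))))))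
        + (∑ i : Fin n, f (Sum.inr (Sum.inr (Sum.inr (Sum.inr (Sum.inr i)))))))))) := by
  simp [Fintype.sum_sum_type]
lemma arith1 (n E : ℕ) (hE : 1 ≤ E) :
    n * (2*E - 1) + (n * (E*4 + E*E + E) + n * 4) = n * (E*E + 7*E) + n*3 := by
  obtain ⟨F, rfl⟩ : ∃ F, E = F + 1 := ⟨E-1, by omega⟩
  rw [show 2*(F+1) - 1 = 2*F + 1 by omega]
  ring

lemma main_bound (n δ : ℕ) (hn : 1 ≤ n) (hδ : 2 ≤ δ) (hδ' : 2 ≤ δ) (t : TV n δ → ℕ)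
    (hpar : ∀ i : TV n δ, i ≠ (theTree n δ hδ).root →
      t i + 1 ≤ t ((theTree n δ hδ).parent i)) :
    3 ≤ t (Sum.inl () : TV n δ) ∧
    n * ((δ-1)*(δ-1) + 7*(δ-1)) ≤ ((theTree n δ hδ).peakMemory t) * (t (Sum.inl ()) - 1) := by
  classical
  have hroot : (theTree n δ hδ).root = Sum.inl () := rfl
  set cp : Fin n → Fin (δ-1) → TV n δ := fun i j => Sum.inr (Sum.inl (i, j)) with hcp
  set dd : Fin n → Fin (δ-1) → TV n δ := fun i j => Sum.inr (Sum.inr (Sum.inl (i, j))) with hdd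
  set lf : (q : Fin n × Fin (δ-1)) → Fin (δ - q.2.val) → TV n δ :=
    fun q k => Sum.inr (Sum.inr (Sum.inr (Sum.inl ⟨q, k⟩))) with hlf
  set b1 : Fin n → TV n δ := fun i => Sum.inr (Sum.inr (Sum.inr (Sum.inr (Sum.inl i)))) with hb1'
  set b2 : Fin n → TV n δ := fun i => Sum.inr (Sum.inr (Sum.inr (Sum.inr (Sum.inr i)))) with hb2'
  have jlt : ∀ j : Fin (δ-1), j.val - 1 < δ - 1 :=
    fun j => lt_of_le_of_lt (Nat.sub_le _ _) j.isLt
  have hd2 : δ - 2 < δ - 1 := by omega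
  -- parent computations
  have hpcp0 : ∀ i (j : Fin (δ-1)), j.val = 0 →
      (theTree n δ hδ).parent (cp i j) = Sum.inl () := by
    intro i j h
    show (if h : j.val = 0 then _ else _) = _
    exact dif_pos h
  have hpcpj : ∀ i (j : Fin (δ-1)), j.val ≠ 0 →
      (theTree n δ hδ).parent (cp i j) = cp i ⟨j.val - 1, jlt j⟩ := by
    intro i j h
    show (if h : j.val = 0 then _ else _) = _
    exact dif_neg h
  have hpd : ∀ i j, (theTree n δ hδ).parent (dd i j) = cp i j := fun i j => rfl
  have hpl : ∀ q k, (theTree n δ hδ).parent (lf q k) = dd q.1 q.2 := fun q k => rfl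
  have hpb1 : ∀ i, (theTree n δ hδ).parent (b1 i) = cp i ⟨δ - 2, hd2⟩ := fun i => rfl
  have hpb2 : ∀ i, (theTree n δ hδ).parent (b2 i) = b1 i := fun i => rfl
  -- schedule inequalities
  have hd : ∀ i j, t (dd i j) + 1 ≤ t (cp i j) := by
    intro i j
    have := hpar (dd i j) (by simp [hdd, hroot])
    rwa [hpd] at this
  have hl : ∀ q k, t (lf q k) + 1 ≤ t (dd q.1 q.2) := by
    intro q k
    have := hpar (lf q k) (by simp [hlf, hroot])
    rwa [hpl] at this
  have hb2 : ∀ i, t (b2 i) + 1 ≤ t (b1 i) := by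
    intro i
    have := hpar (b2 i) (by simp [hb2', hroot])
    rwa [hpb2] at this
  have hb1 : ∀ i, t (b1 i) + 1 ≤ t (cp i ⟨δ - 2, hd2⟩) := by
    intro i
    have := hpar (b1 i) (by simp [hb1', hroot])
    rwa [hpb1] at this
  have hc0 : ∀ i (j : Fin (δ-1)), j.val = 0 → t (cp i j) + 1 ≤ t (Sum.inl ()) := by
    intro i j h
    have := hpar (cp i j) (by simp [hcp, hroot])
    rwa [hpcp0 i j h] at this
  have hcj : ∀ i (j : Fin (δ-1)), j.val ≠ 0 →
      t (cp i j) + 1 ≤ t (cp i ⟨j.val - 1, jlt j⟩) := by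
    intro i j h
    have := hpar (cp i j) (by simp [hcp, hroot])
    rwa [hpcpj i j h] at this
  -- R and basic bounds
  set R := t (Sum.inl ()) with hRdef
  clear_value R
  have htop : ∀ v : TV n δ, t v ≤ R := by
    rw [hRdef]; exact tree_le_root (theTree n δ hδ) t hpar
  have hlt : ∀ v : TV n δ, v ≠ (theTree n δ hδ).root → t v + 1 ≤ R :=
    fun v h => le_trans (hpar v h) (htop _)
  have hmk : (theTree n δ hδ).makespan t = R + 1 := by
    rw [hRdef]; exact makespan_eq (theTree n δ hδ) t hpar
  have hnecp : ∀ i j, cp i j ≠ (theTree n δ hδ).root := by intro i j; simp [hcp, hroot]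
  have hnedd : ∀ i j, dd i j ≠ (theTree n δ hδ).root := by intro i j; simp [hdd, hroot]
  have hnelf : ∀ q k, lf q k ≠ (theTree n δ hδ).root := by intro q k; simp [hlf, hroot]
  have hneb1 : ∀ i, b1 i ≠ (theTree n δ hδ).root := by intro i; simp [hb1', hroot]
  have hneb2 : ∀ i, b2 i ≠ (theTree n δ hδ).root := by intro i; simp [hb2', hroot]
  have i0 : Fin n := ⟨0, hn⟩
  have hR3 : 3 ≤ R := by
    have h1 := hb2 i0
    have h2 := hb1 i0
    have h3 := hlt (cp i0 ⟨δ - 2, hd2⟩) (hnecp _ _)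
    omega
  have hwin := win_lb (theTree n δ hδ) t R
  -- cp piece
  have Hcp : ∀ p : Fin n × Fin (δ-1),
      (if p.2.val = 0 then 1 else 2) ≤ (theTree n δ hδ).win t R (cp p.1 p.2) := by
    rintro ⟨i, j⟩
    dsimp only
    by_cases hj : j.val = 0
    · have h1 := hlt (cp i j) (hnecp i j)
      have h2 := hwin (cp i j) (R - 1) (by omega) (by rw [hpcp0 i j hj]; omega) (by omega)
      rw [if_pos hj]
      omega
    · have h1 := hcj i j hj
      have h3 := hlt (cp i ⟨j.val - 1, jlt j⟩) (hnecp _ _)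
      have h2 := hwin (cp i j) (t (cp i ⟨j.val - 1, jlt j⟩)) (by omega)
        (by rw [hpcpj i j hj]) (by omega)
      rw [if_neg hj]
      omega
  have Hcp2 : n * (2*(δ-1) - 1)
      ≤ ∑ p : Fin n × Fin (δ-1), (theTree n δ hδ).win t R (Sum.inr (Sum.inl p)) := by
    have h1 : ∑ p : Fin n × Fin (δ-1), (if p.2.val = 0 then 1 else 2)
        ≤ ∑ p : Fin n × Fin (δ-1), (theTree n δ hδ).win t R (Sum.inr (Sum.inl p)) :=
      Finset.sum_le_sum (fun p _ => Hcp p)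
    refine le_trans (le_of_eq ?_) h1
    rw [Fintype.sum_prod_type]
    have h2 : ∀ i : Fin n, (∑ j : Fin (δ-1), if j.val = 0 then 1 else 2) = 2*(δ-1) - 1 := by
      intro i
      rw [Fin.sum_univ_eq_sum_range (fun j => if j = 0 then 1 else 2) (δ-1)]
      exact sumIte (δ-1) (by omega)
    rw [Finset.sum_congr rfl (fun i _ => h2 i)]
    simp [mul_comm]
  -- unit piece
  have Hunit : ∀ p : Fin n × Fin (δ-1),
      2*(δ - p.2.val) + 2 ≤ (theTree n δ hδ).win t R (dd p.1 p.2)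
        + ∑ k : Fin (δ - p.2.val), (theTree n δ hδ).win t R (lf p k) := by
    intro p
    have hm : 2 ≤ δ - p.2.val := by have := p.2.isLt; omega
    have h1 := hd p.1 p.2
    have h2 := hlt (cp p.1 p.2) (hnecp _ _)
    have hwd := hwin (dd p.1 p.2) (t (cp p.1 p.2)) (by omega) (by rw [hpd]) (by omega)
    have hdlt := hlt (dd p.1 p.2) (hnedd _ _)
    have hwl : ∀ k : Fin (δ - p.2.val),
        t (dd p.1 p.2) + 1 - t (lf p k) ≤ (theTree n δ hδ).win t R (lf p k) := by
      intro k
      have := hl p k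
      exact hwin (lf p k) (t (dd p.1 p.2)) (by omega) (by rw [hpl]) (by omega)
    have hw2 : ∀ k : Fin (δ - p.2.val), 2 ≤ (theTree n δ hδ).win t R (lf p k) := by
      intro k
      have h3 := hl p k
      have h4 := hwl k
      omega
    have hk0 : (0 : ℕ) < δ - p.2.val := by omega
    set k0 : Fin (δ - p.2.val) := ⟨0, hk0⟩ with hk0def
    have hsplit := Finset.sum_erase_add Finset.univ
      (fun k => (theTree n δ hδ).win t R (lf p k)) (Finset.mem_univ k0)
    have hrest : 2 * (δ - p.2.val - 1)
        ≤ ∑ k ∈ Finset.univ.erase k0, (theTree n δ hδ).win t R (lf p k) := by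
      have hcard : (Finset.univ.erase k0).card = δ - p.2.val - 1 := by
        rw [Finset.card_erase_of_mem (Finset.mem_univ _)]
        simp
      have h5 := Finset.card_nsmul_le_sum (Finset.univ.erase k0)
        (fun k => (theTree n δ hδ).win t R (lf p k)) 2 (fun k _ => hw2 k)
      rw [hcard, smul_eq_mul] at h5
      omega
    have h6 := hwl k0
    have h7 := hl p k0
    omega
  have Hunits2 : n * ((δ-1)*4 + (δ-1)*(δ-1) + (δ-1))
      ≤ (∑ p : Fin n × Fin (δ-1), (theTree n δ hδ).win t R (Sum.inr (Sum.inr (Sum.inl p))))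
        + ∑ σ : (Σ q : Fin n × Fin (δ-1), Fin (δ - q.2.val)),
            (theTree n δ hδ).win t R (Sum.inr (Sum.inr (Sum.inr (Sum.inl σ)))) := by
    rw [show (Finset.univ : Finset ((Σ q : Fin n × Fin (δ-1), Fin (δ - q.2.val))))
          = Finset.univ.sigma (fun _ => Finset.univ) from (Finset.univ_sigma_univ).symm,
        Finset.sum_sigma, ← Finset.sum_add_distrib]
    have h1 : ∑ p : Fin n × Fin (δ-1), (2*(δ - p.2.val) + 2)
        ≤ ∑ p : Fin n × Fin (δ-1), ((theTree n δ hδ).win t R (Sum.inr (Sum.inr (Sum.inl p)))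
            + ∑ k : Fin (δ - p.2.val),
                (theTree n δ hδ).win t R (Sum.inr (Sum.inr (Sum.inr (Sum.inl ⟨p, k⟩))))) :=
      Finset.sum_le_sum (fun p _ => Hunit p)
    refine le_trans (le_of_eq ?_) h1
    rw [Fintype.sum_prod_type]
    have h2 : ∀ i : Fin n, (∑ j : Fin (δ-1), (2*(δ - j.val) + 2))
        = (δ-1)*4 + (δ-1)*(δ-1) + (δ-1) := by
      intro i
      rw [Fin.sum_univ_eq_sum_range (fun j => 2*(δ - j) + 2) (δ-1)]
      rw [← sumA (δ-1) 4]
      apply Finset.sum_congr rfl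
      intro j hj
      rw [Finset.mem_range] at hj
      omega
    rw [Finset.sum_congr rfl (fun i _ => h2 i)]
    simp [mul_comm]
  -- b piece
  have Hb : ∀ i : Fin n, 4 ≤ (theTree n δ hδ).win t R (b1 i) + (theTree n δ hδ).win t R (b2 i) := by
    intro i
    have h1 := hb1 i
    have h2 := hb2 i
    have h3 := hlt (cp i ⟨δ - 2, hd2⟩) (hnecp _ _)
    have h4 := hlt (b1 i) (hneb1 _)
    have hw1 := hwin (b1 i) (t (cp i ⟨δ - 2, hd2⟩)) (by omega) (by rw [hpb1]) (by omega)
    have hw2 := hwin (b2 i) (t (b1 i)) (by omega) (by rw [hpb2]) (by omega)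
    omega
  have Hb2 : n * 4
      ≤ (∑ i : Fin n, (theTree n δ hδ).win t R (Sum.inr (Sum.inr (Sum.inr (Sum.inr (Sum.inl i))))))
        + ∑ i : Fin n, (theTree n δ hδ).win t R (Sum.inr (Sum.inr (Sum.inr (Sum.inr (Sum.inr i))))) := by
    rw [← Finset.sum_add_distrib]
    have h1 : ∑ i : Fin n, 4
        ≤ ∑ i : Fin n, ((theTree n δ hδ).win t R (Sum.inr (Sum.inr (Sum.inr (Sum.inr (Sum.inl i)))))
            + (theTree n δ hδ).win t R (Sum.inr (Sum.inr (Sum.inr (Sum.inr (Sum.inr i)))))) :=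
      Finset.sum_le_sum (fun i _ => Hb i)
    refine le_trans (le_of_eq ?_) h1
    simp [mul_comm]
  -- total lower bound on window sum
  have hTV := sum_TV n δ (fun v => (theTree n δ hδ).win t R v)
  have HG : n * (2*(δ-1) - 1) + (n * ((δ-1)*4 + (δ-1)*(δ-1) + (δ-1)) + n * 4)
      ≤ ∑ v : TV n δ, (theTree n δ hδ).win t R v := by
    rw [hTV]
    omega
  -- cover bound at step R-1
  have hcover : (theTree n δ hδ).memAt t (R - 1) ≤ 3 * n := by
    classical
    set SA : Finset (TV n δ) := Finset.univ.image (fun i : Fin n => cp i ⟨0, by omega⟩) with hSA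
    set SB : Finset (TV n δ) :=
      Finset.univ.image (fun i : Fin n => if h : 1 < δ - 1 then cp i ⟨1, h⟩ else b1 i) with hSB
    set SC : Finset (TV n δ) := Finset.univ.image (fun i : Fin n => dd i ⟨0, by omega⟩) with hSC
    have hsub : (Finset.univ.filter (fun v : TV n δ =>
          t v ≤ R-1 ∧ (v = (theTree n δ hδ).root ∨ R-1 ≤ t ((theTree n δ hδ).parent v))))
        ⊆ (SA ∪ SB) ∪ SC := by
      intro v hv
      rw [Finset.mem_filter] at hv
      obtain ⟨-, htv, hor⟩ := hv
      rcases v with u | ⟨i,j⟩ | ⟨i,j⟩ | ⟨⟨i,j⟩,k⟩ | i | i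
      · cases u
        have htv' : t (Sum.inl () : TV n δ) ≤ R - 1 := htv
        exact absurd htv' (by omega)
      · have h2 := hor.resolve_left (by simp [hroot])
        by_cases hj0 : j.val = 0
        · refine Finset.mem_union_left _ (Finset.mem_union_left _ ?_)
          rw [hSA, Finset.mem_image]
          refine ⟨i, Finset.mem_univ _, ?_⟩
          have hje : (⟨0, by omega⟩ : Fin (δ-1)) = j := by
            apply Fin.ext
            simp [hj0]
          rw [hje]
        · by_cases hj1 : j.val = 1
          · refine Finset.mem_union_left _ (Finset.mem_union_right _ ?_)
            rw [hSB, Finset.mem_image]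
            refine ⟨i, Finset.mem_univ _, ?_⟩
            have hlt1 : 1 < δ - 1 := by have := j.isLt; omega
            rw [dif_pos hlt1]
            have hje : (⟨1, hlt1⟩ : Fin (δ-1)) = j := by
              apply Fin.ext
              simp [hj1]
            rw [hje]
          · exfalso
            rw [show ((theTree n δ hδ).parent (Sum.inr (Sum.inl (i,j)) : TV n δ))
                  = cp i ⟨j.val - 1, jlt j⟩ from hpcpj i j hj0] at h2
            have h3 := hcj i ⟨j.val - 1, jlt j⟩ (by show j.val - 1 ≠ 0; omega)
            have h4 := hlt (cp i ⟨(⟨j.val - 1, jlt j⟩ : Fin (δ-1)).val - 1,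
              jlt ⟨j.val - 1, jlt j⟩⟩) (hnecp _ _)
            omega
      · have h2 := hor.resolve_left (by simp [hroot])
        rw [show ((theTree n δ hδ).parent (Sum.inr (Sum.inr (Sum.inl (i,j))) : TV n δ))
              = cp i j from rfl] at h2
        by_cases hj0 : j.val = 0
        · refine Finset.mem_union_right _ ?_
          rw [hSC, Finset.mem_image]
          refine ⟨i, Finset.mem_univ _, ?_⟩
          have hje : (⟨0, by omega⟩ : Fin (δ-1)) = j := by
            apply Fin.ext
            simp [hj0]
          rw [hje]
        · exfalso
          have h3 := hcj i j hj0
          have h4 := hlt (cp i ⟨j.val - 1, jlt j⟩) (hnecp _ _)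
          omega
      · exfalso
        have h2 := hor.resolve_left (by simp [hroot])
        rw [show ((theTree n δ hδ).parent
              (Sum.inr (Sum.inr (Sum.inr (Sum.inl ⟨(i,j),k⟩))) : TV n δ))
              = dd i j from rfl] at h2
        have h3 := hd i j
        have h4 := hlt (cp i j) (hnecp _ _)
        omega
      · have h2 := hor.resolve_left (by simp [hroot])
        rw [show ((theTree n δ hδ).parent
              (Sum.inr (Sum.inr (Sum.inr (Sum.inr (Sum.inl i)))) : TV n δ))
              = cp i ⟨δ - 2, hd2⟩ from rfl] at h2
        by_cases hδ3 : 1 < δ - 1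
        · exfalso
          have h3 := hcj i ⟨δ - 2, hd2⟩ (by show δ - 2 ≠ 0; omega)
          have h4 := hlt (cp i ⟨(⟨δ - 2, hd2⟩ : Fin (δ-1)).val - 1,
            jlt ⟨δ - 2, hd2⟩⟩) (hnecp _ _)
          omega
        · refine Finset.mem_union_left _ (Finset.mem_union_right _ ?_)
          rw [hSB, Finset.mem_image]
          exact ⟨i, Finset.mem_univ _, by rw [dif_neg hδ3]⟩
      · exfalso
        have h2 := hor.resolve_left (by simp [hroot])
        rw [show ((theTree n δ hδ).parent
              (Sum.inr (Sum.inr (Sum.inr (Sum.inr (Sum.inr i)))) : TV n δ))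
              = b1 i from rfl] at h2
        have h3 := hb1 i
        have h4 := hlt (cp i ⟨δ - 2, hd2⟩) (hnecp _ _)
        omega
    have hcardA : SA.card ≤ n := le_trans (Finset.card_image_le) (by simp)
    have hcardB : SB.card ≤ n := le_trans (Finset.card_image_le) (by simp)
    have hcardC : SC.card ≤ n := le_trans (Finset.card_image_le) (by simp)
    have hAB := Finset.card_union_le (SA ∪ SB) SC
    have hAB2 := Finset.card_union_le SA SB
    have hmle : (theTree n δ hδ).memAt t (R-1) ≤ ((SA ∪ SB) ∪ SC).card := by
      unfold InTree.memAt
      exact Finset.card_le_card (fun v hv => hsub (by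
        simp only [Finset.mem_filter, Finset.mem_univ, true_and] at hv
        exact Finset.mem_filter.2 ⟨Finset.mem_univ _, hv⟩))
    omega
  -- assembly
  refine ⟨hR3, ?_⟩
  have hsum : ∑ s ∈ Finset.range R, (theTree n δ hδ).memAt t s
      = ∑ v : TV n δ, (theTree n δ hδ).win t R v := sum_win (theTree n δ hδ) t R
  have hmem : ∀ s ∈ Finset.range (R-1),
      (theTree n δ hδ).memAt t s ≤ (theTree n δ hδ).peakMemory t := by
    intro s hs
    rw [Finset.mem_range] at hs
    exact memAt_le_peak _ _ _ (by rw [hmk]; omega)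
  have hpk : ∑ s ∈ Finset.range (R-1), (theTree n δ hδ).memAt t s
      ≤ (theTree n δ hδ).peakMemory t * (R-1) := by
    have h := Finset.sum_le_card_nsmul (Finset.range (R-1)) _ _ hmem
    rw [Finset.card_range, smul_eq_mul, mul_comm] at h
    exact h
  have hsplitG : ∑ s ∈ Finset.range R, (theTree n δ hδ).memAt t s
      = (∑ s ∈ Finset.range (R-1), (theTree n δ hδ).memAt t s)
        + (theTree n δ hδ).memAt t (R-1) := by
    conv_lhs => rw [show R = (R-1)+1 by omega]
    rw [Finset.sum_range_succ]
  have harith := arith1 n (δ-1) (by omega)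
  omega


/-- Every schedule of `T(n, δ)` on `|V|` processors with makespan at most `C`
(where `C ≥ δ + 2`) has peak memory at least `n(δ² + 5δ − 6)/(C − 2)`. -/
theorem stmt9 (n δ : ℕ) (hn : 1 ≤ n) (hδ : 2 ≤ δ) (C : ℝ) (hC : (δ : ℝ) + 2 ≤ C)
    (t : (theTree n δ hδ).V → ℕ)
    (ht : (theTree n δ hδ).IsSchedule (Fintype.card (theTree n δ hδ).V) t)
    (hms : ((theTree n δ hδ).makespan t : ℝ) ≤ C) :
    (n : ℝ) * ((δ : ℝ)^2 + 5*(δ : ℝ) - 6) / (C - 2)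
      ≤ ((theTree n δ hδ).peakMemory t : ℝ) := by
  obtain ⟨-, hpar⟩ := ht
  obtain ⟨hR3, key⟩ := main_bound n δ hn hδ hδ t hpar
  have hmk : (theTree n δ hδ).makespan t = t (Sum.inl () : TV n δ) + 1 :=
    makespan_eq (theTree n δ hδ) t hpar
  set R := t (Sum.inl () : TV n δ) with hR
  set P := (theTree n δ hδ).peakMemory t with hP
  have hδR : (2:ℝ) ≤ (δ:ℝ) := by exact_mod_cast hδ
  have hC2 : (0:ℝ) < C - 2 := by linarith
  rw [div_le_iff₀ hC2]
  have hcast : ((δ - 1 : ℕ) : ℝ) = (δ:ℝ) - 1 := by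
    exact_mod_cast Nat.cast_sub (by omega : 1 ≤ δ)
  have e1 : (n:ℝ) * ((δ:ℝ)^2 + 5*(δ:ℝ) - 6) = ((n * ((δ-1)*(δ-1) + 7*(δ-1)) : ℕ) : ℝ) := by
    push_cast [hcast]
    ring
  have e2 : ((n * ((δ-1)*(δ-1) + 7*(δ-1)) : ℕ) : ℝ) ≤ (P:ℝ) * ((R - 1 : ℕ) : ℝ) := by
    exact_mod_cast key
  have e3 : ((R - 1 : ℕ) : ℝ) ≤ C - 2 := by
    have h1 : ((R - 1 : ℕ) : ℝ) = (R:ℝ) - 1 := by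
      exact_mod_cast Nat.cast_sub (by omega : 1 ≤ R)
    rw [hmk] at hms
    push_cast at hms
    rw [h1]
    linarith
  calc (n:ℝ) * ((δ:ℝ)^2 + 5*(δ:ℝ) - 6) = ((n * ((δ-1)*(δ-1) + 7*(δ-1)) : ℕ) : ℝ) := e1
    _ ≤ (P:ℝ) * ((R-1:ℕ):ℝ) := e2
    _ ≤ (P:ℝ) * (C - 2) := mul_le_mul_of_nonneg_left e3 (by positivity)
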